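/- If [x,y] is a MUPS of S with y ≤ t and x > s (where s ≤ t), and S[i..j] is a SUPS for [s,t] whose unique MUPS is [x,y], then [x,y] must be the rightmost MUPS ending at or before t (i.e., there is no MUPS [x',y'] with y < y' ≤ t) — equivalently, any SUPS for [s,t] contains only a MUPS that either contains [s,t], is the rightmost MUPS ending at or before t, or is the leftmost MUPS beginning at or after s. -/
import Mathlib


/-- `sub S i j` is the substring `S[i..j]`, 1-indexed and inclusive. -/
def sub (S : List Char) (i j : ℕ) : List Char := (S.drop (i-1)).take (j+1-i)

/-- A string is a palindrome if it equals its reversal. -/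
def isPal (w : List Char) : Prop := w.reverse = w

/-- The set of (1-indexed) occurrence positions of `w` in `S`. -/
def occs (S w : List Char) : Finset ℕ :=
  (Finset.Icc 1 S.length).filter (fun p => sub S p (p + w.length - 1) = w)

/-- `w` occurs exactly once in `S`. -/
def uniqueIn (S w : List Char) : Prop := (occs S w).card = 1

/-- `[i,j]` is (the interval of) a unique palindromic substring of `S`. -/
def UPS (S : List Char) (i j : ℕ) : Prop :=
  1 ≤ i ∧ i ≤ j ∧ j ≤ S.length ∧ isPal (sub S i j) ∧ uniqueIn S (sub S i j)

/-- `[i,j]` is a minimal unique palindromic substring of `S`. -/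
def MUPS (S : List Char) (i j : ℕ) : Prop :=
  UPS S i j ∧ (j + 1 - i ≤ 2 ∨ 2 ≤ (occs S (sub S (i+1) (j-1))).card)

/-- `[i,j]` is a shortest unique palindromic substring of `S` for the query `[s,t]`. -/
def SUPS (S : List Char) (s t i j : ℕ) : Prop :=
  UPS S i j ∧ i ≤ s ∧ s ≤ t ∧ t ≤ j ∧
    ∀ i' j', UPS S i' j' → i' ≤ s → t ≤ j' → j - i ≤ j' - i'

lemma sub_length (S : List Char) {x y : ℕ} (hx : 1 ≤ x) (hxy : x ≤ y) (hy : y ≤ S.length) :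
    (sub S x y).length = y + 1 - x := by
  simp [sub]; omega

lemma sub_getElem (S : List Char) {x y k : ℕ} (hx : 1 ≤ x) (hxy : x ≤ y) (hy : y ≤ S.length)
    (hk : k < y + 1 - x) :
    (sub S x y)[k]'(by rw [sub_length S hx hxy hy]; omega) = S[x - 1 + k]'(by omega) := by
  simp only [sub, List.getElem_take, List.getElem_drop]

lemma pal_getElem {w : List Char} (hp : isPal w) {k : ℕ} (hk : k < w.length) :
    w[k] = w[w.length - 1 - k]'(by omega) := by
  have h1 : w.reverse[k]'(by simpa using hk) = w[w.length-1-k]'(by omega) :=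
    List.getElem_reverse _
  rw [← h1]
  exact List.getElem_of_eq hp.symm hk


lemma gE (S : List Char) {a b : ℕ} (h : a = b) {ha : a < S.length} {hb : b < S.length} :
    S[a] = S[b] := by subst h; rfl

lemma sub_getElem' (S : List Char) {x y k : ℕ} (hx : 1 ≤ x)
    (h : k < (sub S x y).length) :
    (sub S x y)[k] = S[x - 1 + k]'(by simp [sub] at h; omega) := by
  simp only [sub, List.getElem_take, List.getElem_drop]

lemma mirror (S : List Char) {i j x y : ℕ} (hi : 1 ≤ i) (hix : i ≤ x) (hxy : x ≤ y)
    (hyj : y ≤ j) (hj : j ≤ S.length) (hp : isPal (sub S i j)) :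
    sub S (i+j-y) (i+j-x) = (sub S x y).reverse := by
  have hL : (sub S i j).length = j + 1 - i := sub_length S hi (by omega) hj
  have hl : (sub S x y).length = y + 1 - x := sub_length S (by omega) hxy (by omega)
  apply List.ext_getElem
  · rw [sub_length S (by omega) (by omega) (by omega), List.length_reverse, hl]
    omega
  · intro k h1 h2
    rw [sub_length S (by omega) (by omega) (by omega)] at h1
    rw [List.getElem_reverse, sub_getElem' S (by omega), sub_getElem' S (by omega)]
    have hm : y - i - k < (sub S i j).length := by rw [hL]; omega
    have hpal := pal_getElem hp hm
    rw [sub_getElem' S hi, sub_getElem' S hi] at hpal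
    have e := hpal.symm
    refine Eq.trans (gE S ?_) (e.trans (gE S ?_)) <;> omega

lemma mem_occs {S w : List Char} {p : ℕ} :
    p ∈ occs S w ↔ (1 ≤ p ∧ p ≤ S.length ∧ sub S p (p + w.length - 1) = w) := by
  simp [occs, Finset.mem_filter, Finset.mem_Icc, and_assoc]

lemma self_mem_occs (S : List Char) {x y : ℕ} (hx : 1 ≤ x) (hxy : x ≤ y) (hy : y ≤ S.length) :
    x ∈ occs S (sub S x y) := by
  rw [mem_occs]
  refine ⟨hx, by omega, ?_⟩
  rw [sub_length S hx hxy hy]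
  congr 1
  omega

lemma unique_pos {S : List Char} {x y p : ℕ} (hx : 1 ≤ x) (hxy : x ≤ y) (hy : y ≤ S.length)
    (hu : uniqueIn S (sub S x y)) (hp : p ∈ occs S (sub S x y)) : p = x := by
  obtain ⟨a, ha⟩ := Finset.card_eq_one.mp hu
  have h1 := self_mem_occs S hx hxy hy
  rw [ha, Finset.mem_singleton] at hp h1
  rw [hp, h1]


lemma center {S : List Char} {i j x y : ℕ} (hu : UPS S i j) (hix : i ≤ x) (hxy : x ≤ y)
    (hyj : y ≤ j) (hpal : isPal (sub S x y)) (huniq : uniqueIn S (sub S x y)) :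
    x + y = i + j := by
  obtain ⟨hi, hij, hj, hP, _⟩ := hu
  have hmir := mirror S hi hix hxy hyj hj hP
  rw [hpal] at hmir
  have hmem : (i + j - y) ∈ occs S (sub S x y) := by
    rw [mem_occs]
    refine ⟨by omega, by omega, ?_⟩
    rw [sub_length S (by omega) hxy (by omega)]
    have : i + j - y + (y + 1 - x) - 1 = i + j - x := by omega
    rw [this, hmir]
  have := unique_pos (by omega) hxy (by omega) huniq hmem
  omega

lemma nested_contra {S : List Char} {x y x'' y'' : ℕ} (hm : MUPS S x'' y'') (hx : x'' < x)
    (hxy : x ≤ y) (hy : y < y'') (hu : uniqueIn S (sub S x y)) : False := by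
  obtain ⟨⟨h1, h2, h3, _, _⟩, hmin⟩ := hm
  rcases hmin with hshort | hcard
  · omega
  · -- inner substring occurs twice
    set I := sub S (x''+1) (y''-1) with hI
    have hlenI : I.length = y'' - x'' - 1 := by
      rw [hI, sub_length S (by omega) (by omega) (by omega)]; omega
    obtain ⟨p, hp, q, hq, hpq⟩ := Finset.one_lt_card.mp (by omega : 1 < (occs S I).card)
    set d := x - x'' - 1 with hd
    set L := y + 1 - x with hL
    have key : ∀ r : ℕ, r ∈ occs S I → (r + d) ∈ occs S (sub S x y) := by
      intro r hr
      rw [mem_occs] at hr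
      obtain ⟨hr1, hr2, hsub⟩ := hr
      rw [hlenI] at hsub
      have hfit : r - 1 + (y'' - x'' - 1) ≤ S.length := by
        have hlen := congrArg List.length hsub
        rw [hlenI] at hlen
        simp [sub] at hlen
        omega
      rw [mem_occs]
      have hlxy : (sub S x y).length = L := sub_length S (by omega) hxy (by omega)
      rw [hlxy]
      refine ⟨by omega, by omega, ?_⟩
      apply List.ext_getElem
      · rw [sub_length S (by omega) (by omega) (by omega), hlxy]
        omega
      · intro k hk1 hk2
        rw [sub_length S (by omega) (by omega) (by omega)] at hk1
        rw [sub_getElem' S (by omega), sub_getElem' S (by omega)]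
        have hdk : d + k < (sub S r (r + (y'' - x'' - 1) - 1)).length := by
          rw [sub_length S (by omega) (by omega) (by omega)]; omega
        have e1 := List.getElem_of_eq hsub hdk
        rw [sub_getElem' S (by omega), sub_getElem' S (by omega)] at e1
        refine Eq.trans (gE S ?_) (e1.trans (gE S ?_)) <;> omega
    have hcard2 : 1 < (occs S (sub S x y)).card :=
      Finset.one_lt_card.mpr ⟨p + d, key p hp, q + d, key q hq, by omega⟩
    rw [uniqueIn] at hu
    omega

theorem stmt15 (S : List Char) (s t i j x y : ℕ)
    (hs : SUPS S s t i j) (hm : MUPS S x y) (hxi : i ≤ x) (hyj : y ≤ j) :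
    (x ≤ s ∧ t ≤ y) ∨
    (y ≤ t ∧ ∀ x' y', MUPS S x' y' → y' ≤ t → y' ≤ y) ∨
    (s ≤ x ∧ ∀ x' y', MUPS S x' y' → s ≤ x' → x ≤ x') := by
  obtain ⟨hUij, his, hst, htj, hmin⟩ := hs
  obtain ⟨hx1, hxy, hyS, hpalxy, huxy⟩ := hm.1
  have hcenter : x + y = i + j := center hUij hxi hxy hyj hpalxy huxy
  by_cases h1 : y < t
  · right; left
    refine ⟨by omega, ?_⟩
    intro x' y' hm' hy't
    by_contra hcon
    push_neg at hcon
    have hx'x : x' < x := by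
      by_cases hcase : i ≤ x'
      · obtain ⟨a1, a2, a3, hp', hu'⟩ := hm'.1
        have := center hUij hcase a2 (by omega) hp' hu'
        omega
      · omega
    exact nested_contra hm' hx'x hxy (by omega) huxy
  · by_cases h2 : x ≤ s
    · exact Or.inl ⟨h2, by omega⟩
    · right; right
      refine ⟨by omega, ?_⟩
      intro x' y' hm' hsx'
      by_contra hcon
      push_neg at hcon
      have hy'y : y < y' := by
        by_cases hcase : y' ≤ j
        · obtain ⟨a1, a2, a3, hp', hu'⟩ := hm'.1
          have := center hUij (by omega) a2 hcase hp' hu'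
          omega
        · obtain ⟨a1, a2, a3, _, _⟩ := hm'.1
          omega
      exact nested_contra hm' hcon hxy hy'y huxy
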